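/- Let ν > 0, m ∈ ℝ, I ⊂ ℝ be an open interval, and let η, u : ℝ² × I → ℝ² and q : ℝ² × I → ℝ be smooth, 2-periodic in each spatial variable, with det(I + ∇η(·,t)) = 1 for all t, and suppose they satisfy the non-resistive MHD system in Lagrangian coordinates: η_t = u, u_t + ∇_𝒜 q − ν Δ_𝒜 u = m² ∂₂²η, div_𝒜 u = 0, where 𝒜 := (∇(η + id))^{-T}. Then for every t ∈ I the basic energy identity holds: (1/2) d/dt ∫_{(-1,1)²} ( |u|² + m² |∂₂η|² ) dy + ν ∫_{(-1,1)²} |∇_𝒜 u|² dy = 0, where |∇_𝒜 u|² := Σ_j |𝒜∇u_j|². -/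

import Mathlib

open MeasureTheory

noncomputable section

/-- A point of the plane `ℝ²`. -/
abbrev Pt := ℝ × ℝ

/-- A space-time point `(y, t) ∈ ℝ² × ℝ`. -/
abbrev PtT := (ℝ × ℝ) × ℝ

/-- Spatial partial derivative in the first variable. -/
def sp1 (g : PtT → ℝ) : PtT → ℝ := fun p => fderiv ℝ (fun y : Pt => g (y, p.2)) p.1 (1, 0)

/-- Spatial partial derivative in the second variable. -/
def sp2 (g : PtT → ℝ) : PtT → ℝ := fun p => fderiv ℝ (fun y : Pt => g (y, p.2)) p.1 (0, 1)

/-- Time derivative. -/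
def dt (g : PtT → ℝ) : PtT → ℝ := fun p => deriv (fun t => g (p.1, t)) p.2

/-- First component of a vector field. -/
def c1 (v : PtT → Pt) : PtT → ℝ := fun p => (v p).1

/-- Second component of a vector field. -/
def c2 (v : PtT → Pt) : PtT → ℝ := fun p => (v p).2

/-- `𝒜₁₁ = ∂₂ζ₂`, for `𝒜 = (∇ζ)^{-T}` in the cofactor form valid when `det ∇ζ = 1`. -/
def A11 (ζ : PtT → Pt) : PtT → ℝ := sp2 (c2 ζ)

/-- `𝒜₁₂ = −∂₁ζ₂`. -/
def A12 (ζ : PtT → Pt) : PtT → ℝ := fun p => -(sp1 (c2 ζ) p)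

/-- `𝒜₂₁ = −∂₂ζ₁`. -/
def A21 (ζ : PtT → Pt) : PtT → ℝ := fun p => -(sp2 (c1 ζ) p)

/-- `𝒜₂₂ = ∂₁ζ₁`. -/
def A22 (ζ : PtT → Pt) : PtT → ℝ := sp1 (c1 ζ)

/-- `div_𝒜 X = Σ_{l,k} 𝒜_{lk} ∂_k X_l`. -/
def divA (ζ : PtT → Pt) (X : PtT → Pt) : PtT → ℝ :=
  fun p => A11 ζ p * sp1 (c1 X) p + A12 ζ p * sp2 (c1 X) p
    + A21 ζ p * sp1 (c2 X) p + A22 ζ p * sp2 (c2 X) p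

/-- The flow map `ζ = η + id` associated with a displacement `η`. -/
def zetaOf (η : PtT → Pt) : PtT → Pt := fun p => ((η p).1 + p.1.1, (η p).2 + p.1.2)

/-- First component of `∇_𝒜 f`, i.e. `𝒜₁₁∂₁f + 𝒜₁₂∂₂f`. -/
def gradA1 (ζ : PtT → Pt) (f : PtT → ℝ) : PtT → ℝ :=
  fun p => A11 ζ p * sp1 f p + A12 ζ p * sp2 f p

/-- Second component of `∇_𝒜 f`, i.e. `𝒜₂₁∂₁f + 𝒜₂₂∂₂f`. -/
def gradA2 (ζ : PtT → Pt) (f : PtT → ℝ) : PtT → ℝ :=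
  fun p => A21 ζ p * sp1 f p + A22 ζ p * sp2 f p

/-- The operator `Δ_𝒜 f = div_𝒜 ∇_𝒜 f`. -/
def lapA (ζ : PtT → Pt) (f : PtT → ℝ) : PtT → ℝ :=
  fun p => A11 ζ p * sp1 (gradA1 ζ f) p + A12 ζ p * sp2 (gradA1 ζ f) p
    + A21 ζ p * sp1 (gradA2 ζ f) p + A22 ζ p * sp2 (gradA2 ζ f) p

/-- `g` is 2-periodic in each spatial variable. -/
def SPeriodic (g : PtT → ℝ) : Prop :=
  (∀ p : PtT, g ((p.1.1 + 2, p.1.2), p.2) = g p) ∧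
    ∀ p : PtT, g ((p.1.1, p.1.2 + 2), p.2) = g p

/-- The periodic cell `(-1,1)²`. -/
def cell : Set Pt := Set.Ioo (-1 : ℝ) 1 ×ˢ Set.Ioo (-1 : ℝ) 1


-- ======================= auxiliary infrastructure =======================

section Aux

lemma le_top1 : ((⊤:ℕ∞) : WithTop ℕ∞) ≠ 0 := by simp
lemma le_top2 : (2 : WithTop ℕ∞) ≤ ((⊤:ℕ∞) : WithTop ℕ∞) := by
  have : ((2:ℕ∞) : WithTop ℕ∞) ≤ ((⊤:ℕ∞) : WithTop ℕ∞) := by exact_mod_cast le_top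
  simpa using this
lemma le_top_add : ((⊤:ℕ∞) : WithTop ℕ∞) + 1 ≤ ((⊤:ℕ∞) : WithTop ℕ∞) := by simp

/-- Full directional derivative. -/
def pd (v : PtT) (f : PtT → ℝ) : PtT → ℝ := fun p => fderiv ℝ f p v

def e1 : PtT := ((1,0),0)
def e2 : PtT := ((0,1),0)
def et : PtT := ((0,0),1)

lemma hasFDerivAt_embS (t : ℝ) (y : Pt) :
    HasFDerivAt (fun y : Pt => ((y, t) : PtT)) (ContinuousLinearMap.inl ℝ Pt ℝ) y :=
  (hasFDerivAt_id y).prodMk (hasFDerivAt_const t y)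

lemma hasFDerivAt_embT (y : Pt) (t : ℝ) :
    HasFDerivAt (fun s : ℝ => ((y, s) : PtT)) (ContinuousLinearMap.inr ℝ Pt ℝ) t :=
  (hasFDerivAt_const y t).prodMk (hasFDerivAt_id t)

lemma sp1_eq_pd {f : PtT → ℝ} (hf : ContDiff ℝ (⊤ : ℕ∞) f) (p : PtT) :
    sp1 f p = pd e1 f p := by
  have h : HasFDerivAt (fun y : Pt => f (y, p.2))
      ((fderiv ℝ f p).comp (ContinuousLinearMap.inl ℝ Pt ℝ)) p.1 := by
    have := (hf.differentiable le_top1 p).hasFDerivAt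
    exact this.comp p.1 (hasFDerivAt_embS p.2 p.1)
  simp [sp1, h.fderiv, pd, e1]

lemma sp2_eq_pd {f : PtT → ℝ} (hf : ContDiff ℝ (⊤ : ℕ∞) f) (p : PtT) :
    sp2 f p = pd e2 f p := by
  have h : HasFDerivAt (fun y : Pt => f (y, p.2))
      ((fderiv ℝ f p).comp (ContinuousLinearMap.inl ℝ Pt ℝ)) p.1 := by
    have := (hf.differentiable le_top1 p).hasFDerivAt
    exact this.comp p.1 (hasFDerivAt_embS p.2 p.1)
  simp [sp2, h.fderiv, pd, e2]

lemma dt_eq_pd {f : PtT → ℝ} (hf : ContDiff ℝ (⊤ : ℕ∞) f) (p : PtT) :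
    dt f p = pd et f p := by
  have h : HasFDerivAt (fun s : ℝ => f (p.1, s))
      ((fderiv ℝ f p).comp (ContinuousLinearMap.inr ℝ Pt ℝ)) p.2 := by
    have := (hf.differentiable le_top1 p).hasFDerivAt
    exact this.comp p.2 (hasFDerivAt_embT p.1 p.2)
  simp [dt, h.hasDerivAt.deriv, pd, et]; rfl

@[fun_prop]
lemma pd_contDiff {f : PtT → ℝ} (hf : ContDiff ℝ (⊤ : ℕ∞) f) (v : PtT) :
    ContDiff ℝ (⊤ : ℕ∞) (pd v f) :=
  (hf.fderiv_right le_top_add).clm_apply contDiff_const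

lemma pd_comm {f : PtT → ℝ} (hf : ContDiff ℝ (⊤ : ℕ∞) f) (v w : PtT) (p : PtT) :
    pd v (pd w f) p = pd w (pd v f) p := by
  have hsymm : IsSymmSndFDerivAt ℝ f p := by
    exact ContDiffAt.isSymmSndFDerivAt hf.contDiffAt
      (by rw [minSmoothness_of_isRCLikeNormedField]; exact le_top2)
  have key : ∀ u z : PtT, pd u (pd z f) p = fderiv ℝ (fderiv ℝ f) p u z := by
    intro u z
    have hdf : DifferentiableAt ℝ (fderiv ℝ f) p :=
      ((hf.fderiv_right le_top_add).differentiable le_top1) p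
    have h2 : fderiv ℝ (fun q => fderiv ℝ f q z) p = (fderiv ℝ (fderiv ℝ f) p).flip z := by
      rw [fderiv_clm_apply hdf (differentiableAt_const z)]
      ext x
      all_goals simp [fderiv_const]
    show fderiv ℝ (fun q => fderiv ℝ f q z) p u = fderiv ℝ (fderiv ℝ f) p u z
    rw [h2]; rfl
  rw [key v w, key w v]
  exact (hsymm w v).symm

lemma contDiff_slice {g : PtT → ℝ} (hg : ContDiff ℝ (⊤:ℕ∞) g) (t : ℝ) :
    ContDiff ℝ (⊤:ℕ∞) (fun y : Pt => g (y, t)) :=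
  hg.comp (contDiff_id.prodMk contDiff_const)

lemma integrableOn_cell {F : Pt → ℝ} (hF : Continuous F) : IntegrableOn F cell := by
  have hsub : cell ⊆ Set.Icc (-1:ℝ) 1 ×ˢ Set.Icc (-1:ℝ) 1 :=
    Set.prod_mono Set.Ioo_subset_Icc_self Set.Ioo_subset_Icc_self
  have hK : IsCompact (Set.Icc (-1:ℝ) 1 ×ˢ Set.Icc (-1:ℝ) 1) :=
    isCompact_Icc.prod isCompact_Icc
  exact (hF.continuousOn.integrableOn_compact hK).mono_set hsub

lemma hasDerivAt_slice1 {g : PtT → ℝ} (hg : ContDiff ℝ (⊤:ℕ∞) g) (t b x : ℝ) :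
    HasDerivAt (fun x : ℝ => g ((x, b), t)) (sp1 g ((x, b), t)) x := by
  have hh : HasFDerivAt (fun y : Pt => g (y, t))
      (fderiv ℝ (fun y : Pt => g (y, t)) (x, b)) (x, b) :=
    (((contDiff_slice hg t).differentiable le_top1) (x, b)).hasFDerivAt
  have hemb : HasFDerivAt (fun x : ℝ => ((x, b) : Pt))
      (ContinuousLinearMap.inl ℝ ℝ ℝ) x :=
    (hasFDerivAt_id x).prodMk (hasFDerivAt_const b x)
  have := (hh.comp x hemb).hasDerivAt
  exact this

lemma hasDerivAt_slice2 {g : PtT → ℝ} (hg : ContDiff ℝ (⊤:ℕ∞) g) (t a y : ℝ) :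
    HasDerivAt (fun y : ℝ => g ((a, y), t)) (sp2 g ((a, y), t)) y := by
  have hh : HasFDerivAt (fun z : Pt => g (z, t))
      (fderiv ℝ (fun z : Pt => g (z, t)) (a, y)) (a, y) :=
    (((contDiff_slice hg t).differentiable le_top1) (a, y)).hasFDerivAt
  have hemb : HasFDerivAt (fun y : ℝ => ((a, y) : Pt))
      (ContinuousLinearMap.inr ℝ ℝ ℝ) y :=
    (hasFDerivAt_const a y).prodMk (hasFDerivAt_id y)
  have := (hh.comp y hemb).hasDerivAt
  exact this

lemma pd_continuous {f : PtT → ℝ} (hf : ContDiff ℝ (⊤:ℕ∞) f) (v : PtT) :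
    Continuous (pd v f) := (pd_contDiff hf v).continuous

lemma sp1_continuous_slice {g : PtT → ℝ} (hg : ContDiff ℝ (⊤:ℕ∞) g) (t : ℝ) :
    Continuous (fun y : Pt => sp1 g (y, t)) := by
  have : (fun y : Pt => sp1 g (y, t)) = fun y : Pt => pd e1 g (y, t) := by
    funext y; exact sp1_eq_pd hg (y, t)
  rw [this]
  exact (pd_continuous hg e1).comp (continuous_id.prodMk continuous_const)

lemma sp2_continuous_slice {g : PtT → ℝ} (hg : ContDiff ℝ (⊤:ℕ∞) g) (t : ℝ) :
    Continuous (fun y : Pt => sp2 g (y, t)) := by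
  have : (fun y : Pt => sp2 g (y, t)) = fun y : Pt => pd e2 g (y, t) := by
    funext y; exact sp2_eq_pd hg (y, t)
  rw [this]
  exact (pd_continuous hg e2).comp (continuous_id.prodMk continuous_const)

lemma integral_sp1_zero {g : PtT → ℝ} (hg : ContDiff ℝ (⊤:ℕ∞) g) (hper : SPeriodic g)
    (t : ℝ) : ∫ y in cell, sp1 g (y, t) = 0 := by
  have hint : IntegrableOn (fun y : Pt => sp1 g (y, t)) cell :=
    integrableOn_cell (sp1_continuous_slice hg t)
  have hint' : Integrable (fun y : Pt => sp1 g (y, t))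
      ((volume.restrict (Set.Ioo (-1:ℝ) 1)).prod (volume.restrict (Set.Ioo (-1:ℝ) 1))) := by
    rw [MeasureTheory.Measure.prod_restrict]
    rw [cell, MeasureTheory.Measure.volume_eq_prod] at hint
    exact hint
  have inner : ∀ b : ℝ, ∫ x in Set.Ioo (-1:ℝ) 1, sp1 g ((x, b), t) = 0 := by
    intro b
    rw [← MeasureTheory.integral_Ioc_eq_integral_Ioo,
      ← intervalIntegral.integral_of_le (by norm_num : (-1:ℝ) ≤ 1)]
    rw [intervalIntegral.integral_eq_sub_of_hasDerivAt
      (f := fun x : ℝ => g ((x, b), t)) (f' := fun x : ℝ => sp1 g ((x, b), t))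
      (fun x _ => hasDerivAt_slice1 hg t b x)
      (Continuous.intervalIntegrable
        ((sp1_continuous_slice hg t).comp (continuous_id.prodMk continuous_const)) _ _)]
    have h2 := hper.1 (((-1 : ℝ), b), t)
    norm_num at h2
    show g ((1, b), t) - g ((-1, b), t) = 0
    rw [h2]; ring
  rw [cell, MeasureTheory.Measure.volume_eq_prod]
  rw [MeasureTheory.setIntegral_prod _
    (by rw [← cell, ← MeasureTheory.Measure.volume_eq_prod]; exact hint)]
  rw [MeasureTheory.integral_integral_swap hint']
  simp only [inner]
  simp

lemma integral_sp2_zero {g : PtT → ℝ} (hg : ContDiff ℝ (⊤:ℕ∞) g) (hper : SPeriodic g)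
    (t : ℝ) : ∫ y in cell, sp2 g (y, t) = 0 := by
  have hint : IntegrableOn (fun y : Pt => sp2 g (y, t)) cell :=
    integrableOn_cell (sp2_continuous_slice hg t)
  have inner : ∀ a : ℝ, ∫ y in Set.Ioo (-1:ℝ) 1, sp2 g ((a, y), t) = 0 := by
    intro a
    rw [← MeasureTheory.integral_Ioc_eq_integral_Ioo,
      ← intervalIntegral.integral_of_le (by norm_num : (-1:ℝ) ≤ 1)]
    rw [intervalIntegral.integral_eq_sub_of_hasDerivAt
      (f := fun y : ℝ => g ((a, y), t)) (f' := fun y : ℝ => sp2 g ((a, y), t))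
      (fun y _ => hasDerivAt_slice2 hg t a y)
      (Continuous.intervalIntegrable
        ((sp2_continuous_slice hg t).comp (continuous_const.prodMk continuous_id)) _ _)]
    have h2 := hper.2 ((a, (-1 : ℝ)), t)
    norm_num at h2
    show g ((a, 1), t) - g ((a, -1), t) = 0
    rw [h2]; ring
  rw [cell, MeasureTheory.Measure.volume_eq_prod]
  rw [MeasureTheory.setIntegral_prod _
    (by rw [← cell, ← MeasureTheory.Measure.volume_eq_prod]; exact hint)]
  simp only [inner]
  simp

lemma dt_continuous {g : PtT → ℝ} (hg : ContDiff ℝ (⊤:ℕ∞) g) : Continuous (dt g) := by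
  have : dt g = pd et g := funext (dt_eq_pd hg)
  rw [this]; exact pd_continuous hg et

lemma hasDerivAt_sliceT {g : PtT → ℝ} (hg : ContDiff ℝ (⊤:ℕ∞) g) (y : Pt) (s : ℝ) :
    HasDerivAt (fun s : ℝ => g (y, s)) (dt g (y, s)) s := by
  have hd : DifferentiableAt ℝ (fun s : ℝ => g (y, s)) s := by
    exact ((hg.comp (contDiff_const.prodMk contDiff_id)).differentiable le_top1) s
  exact hd.hasDerivAt

lemma volume_cell_lt_top : volume cell < ⊤ := by
  have hsub : cell ⊆ Set.Icc (-1:ℝ) 1 ×ˢ Set.Icc (-1:ℝ) 1 :=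
    Set.prod_mono Set.Ioo_subset_Icc_self Set.Ioo_subset_Icc_self
  exact lt_of_le_of_lt (measure_mono hsub)
    ((isCompact_Icc.prod isCompact_Icc).measure_lt_top)

lemma hasDerivAt_integral_cell {g : PtT → ℝ} (hg : ContDiff ℝ (⊤:ℕ∞) g) (t : ℝ) :
    HasDerivAt (fun s : ℝ => ∫ y in cell, g (y, s)) (∫ y in cell, dt g (y, t)) t := by
  set K : Set PtT := (Set.Icc (-1:ℝ) 1 ×ˢ Set.Icc (-1:ℝ) 1) ×ˢ Set.Icc (t-1) (t+1) with hK
  have hKc : IsCompact K := ((isCompact_Icc.prod isCompact_Icc).prod isCompact_Icc)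
  obtain ⟨C, hC⟩ := hKc.exists_bound_of_continuousOn (dt_continuous hg).continuousOn
  have hmeas : MeasurableSet cell := (measurableSet_Ioo.prod measurableSet_Ioo)
  have main := hasDerivAt_integral_of_dominated_loc_of_deriv_le
    (μ := volume.restrict cell) (F := fun s (y : Pt) => g (y, s))
    (F' := fun s (y : Pt) => dt g (y, s)) (x₀ := t) (bound := fun _ => C)
    (s := Metric.ball t 1) (Metric.ball_mem_nhds t one_pos)
    (Filter.Eventually.of_forall (fun s =>
      ((hg.continuous.comp (continuous_id.prodMk continuous_const)).aestronglyMeasurable)))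
    (integrableOn_cell (hg.continuous.comp (continuous_id.prodMk continuous_const)))
    (((dt_continuous hg).comp (continuous_id.prodMk continuous_const)).aestronglyMeasurable)
    ?_ ?_ ?_
  · exact main.2
  · refine Filter.eventually_of_mem (self_mem_ae_restrict hmeas) (fun y hy s hs => ?_)
    have hyK : ((y, s) : PtT) ∈ K := by
      constructor
      · exact Set.prod_mono Set.Ioo_subset_Icc_self Set.Ioo_subset_Icc_self hy
      · have := Metric.mem_ball.1 hs
        rw [Real.dist_eq] at this
        constructor <;> [linarith [abs_lt.1 this |>.1]; linarith [abs_lt.1 this |>.2]]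
    calc ‖dt g (y, s)‖ = ‖dt g ((y, s) : PtT)‖ := rfl
      _ ≤ C := hC _ hyK
  · exact (MeasureTheory.integrableOn_const_iff).2 (Or.inr volume_cell_lt_top)
  · exact Filter.Eventually.of_forall (fun y s _ => hasDerivAt_sliceT hg y s)

-- ## pd algebra
lemma diffAt {f : PtT → ℝ} (hf : ContDiff ℝ (⊤:ℕ∞) f) (p : PtT) :
    DifferentiableAt ℝ f p := (hf.differentiable le_top1) p

lemma pdE_add {f g : PtT → ℝ} (hf : ContDiff ℝ (⊤:ℕ∞) f) (hg : ContDiff ℝ (⊤:ℕ∞) g)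
    (v p : PtT) : pd v (fun p => f p + g p) p = pd v f p + pd v g p := by
  simp [pd, fderiv_fun_add (diffAt hf p) (diffAt hg p)]

lemma pdE_mul {f g : PtT → ℝ} (hf : ContDiff ℝ (⊤:ℕ∞) f) (hg : ContDiff ℝ (⊤:ℕ∞) g)
    (v p : PtT) : pd v (fun p => f p * g p) p = pd v f p * g p + f p * pd v g p := by
  simp [pd, fderiv_fun_mul (diffAt hf p) (diffAt hg p)]; ring

lemma pdE_constmul {f : PtT → ℝ} (hf : ContDiff ℝ (⊤:ℕ∞) f) (c : ℝ)
    (v p : PtT) : pd v (fun p => c * f p) p = c * pd v f p := by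
  simp [pd, fderiv_const_mul (diffAt hf p) c]

lemma pdE_sub {f g : PtT → ℝ} (hf : ContDiff ℝ (⊤:ℕ∞) f) (hg : ContDiff ℝ (⊤:ℕ∞) g)
    (v p : PtT) : pd v (fun p => f p - g p) p = pd v f p - pd v g p := by
  simp [pd, fderiv_fun_sub (diffAt hf p) (diffAt hg p)]

lemma pdE_addconst {f : PtT → ℝ} (c : ℝ)
    (v p : PtT) : pd v (fun p => f p + c) p = pd v f p := by
  simp [pd, fderiv_add_const]

lemma pdE_neg {f : PtT → ℝ} (v p : PtT) : pd v (fun p => -(f p)) p = -(pd v f p) := by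
  simp [pd, fderiv_neg]

lemma pdE_cst {c : ℝ} (v p : PtT) : pd v (fun _ => c) p = 0 := by
  simp [pd, fderiv_const]

-- ## congruence on time slices
lemma sp1_congr_slice {f g : PtT → ℝ} (p : PtT)
    (h : ∀ y : Pt, f (y, p.2) = g (y, p.2)) : sp1 f p = sp1 g p := by
  show fderiv ℝ (fun y : Pt => f (y, p.2)) p.1 (1,0)
      = fderiv ℝ (fun y : Pt => g (y, p.2)) p.1 (1,0)
  rw [funext h]

lemma sp2_congr_slice {f g : PtT → ℝ} (p : PtT)
    (h : ∀ y : Pt, f (y, p.2) = g (y, p.2)) : sp2 f p = sp2 g p := by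
  show fderiv ℝ (fun y : Pt => f (y, p.2)) p.1 (0,1)
      = fderiv ℝ (fun y : Pt => g (y, p.2)) p.1 (0,1)
  rw [funext h]

-- ## periodicity closure
lemma fderiv_shift {h : Pt → ℝ} (hh : ContDiff ℝ (⊤:ℕ∞) h) (c w : Pt) :
    fderiv ℝ (fun z => h (z + c)) w = fderiv ℝ h (w + c) := by
  have ht : HasFDerivAt (fun z : Pt => z + c) (ContinuousLinearMap.id ℝ Pt) w :=
    (hasFDerivAt_id w).add_const c
  have := (((hh.differentiable le_top1) (w + c)).hasFDerivAt.comp w ht).fderiv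
  exact this

lemma SPeriodic.sp1per {g : PtT → ℝ} (hg : ContDiff ℝ (⊤:ℕ∞) g) (hper : SPeriodic g) :
    SPeriodic (sp1 g) := by
  constructor <;> intro p
  · show fderiv ℝ (fun y : Pt => g (y, p.2)) (p.1.1 + 2, p.1.2) (1,0) = _
    have hx : ((p.1.1 + 2, p.1.2) : Pt) = p.1 + (2, 0) := by simp [Prod.ext_iff]
    have hfun : (fun z : Pt => g (z + (2,0), p.2)) = fun y : Pt => g (y, p.2) := by
      funext z
      have h2 : z + ((2:ℝ),(0:ℝ)) = ((z.1 + 2, z.2) : Pt) := by simp [Prod.ext_iff]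
      rw [h2]; exact hper.1 ((z, p.2))
    rw [hx, ← fderiv_shift (contDiff_slice hg p.2) (2,0) p.1, hfun]
    rfl
  · show fderiv ℝ (fun y : Pt => g (y, p.2)) (p.1.1, p.1.2 + 2) (1,0) = _
    have hx : ((p.1.1, p.1.2 + 2) : Pt) = p.1 + (0, 2) := by simp [Prod.ext_iff]
    have hfun : (fun z : Pt => g (z + (0,2), p.2)) = fun y : Pt => g (y, p.2) := by
      funext z
      have h2 : z + ((0:ℝ),(2:ℝ)) = ((z.1, z.2 + 2) : Pt) := by simp [Prod.ext_iff]
      rw [h2]; exact hper.2 ((z, p.2))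
    rw [hx, ← fderiv_shift (contDiff_slice hg p.2) (0,2) p.1, hfun]
    rfl

lemma SPeriodic.sp2per {g : PtT → ℝ} (hg : ContDiff ℝ (⊤:ℕ∞) g) (hper : SPeriodic g) :
    SPeriodic (sp2 g) := by
  constructor <;> intro p
  · show fderiv ℝ (fun y : Pt => g (y, p.2)) (p.1.1 + 2, p.1.2) (0,1) = _
    have hx : ((p.1.1 + 2, p.1.2) : Pt) = p.1 + (2, 0) := by simp [Prod.ext_iff]
    have hfun : (fun z : Pt => g (z + (2,0), p.2)) = fun y : Pt => g (y, p.2) := by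
      funext z
      have h2 : z + ((2:ℝ),(0:ℝ)) = ((z.1 + 2, z.2) : Pt) := by simp [Prod.ext_iff]
      rw [h2]; exact hper.1 ((z, p.2))
    rw [hx, ← fderiv_shift (contDiff_slice hg p.2) (2,0) p.1, hfun]
    rfl
  · show fderiv ℝ (fun y : Pt => g (y, p.2)) (p.1.1, p.1.2 + 2) (0,1) = _
    have hx : ((p.1.1, p.1.2 + 2) : Pt) = p.1 + (0, 2) := by simp [Prod.ext_iff]
    have hfun : (fun z : Pt => g (z + (0,2), p.2)) = fun y : Pt => g (y, p.2) := by
      funext z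
      have h2 : z + ((0:ℝ),(2:ℝ)) = ((z.1, z.2 + 2) : Pt) := by simp [Prod.ext_iff]
      rw [h2]; exact hper.2 ((z, p.2))
    rw [hx, ← fderiv_shift (contDiff_slice hg p.2) (0,2) p.1, hfun]
    rfl

lemma SPeriodic.pd1 {g : PtT → ℝ} (hg : ContDiff ℝ (⊤:ℕ∞) g) (hper : SPeriodic g) :
    SPeriodic (pd e1 g) := by
  have : pd e1 g = sp1 g := (funext (sp1_eq_pd hg)).symm
  rw [this]; exact hper.sp1per hg

lemma SPeriodic.pd2 {g : PtT → ℝ} (hg : ContDiff ℝ (⊤:ℕ∞) g) (hper : SPeriodic g) :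
    SPeriodic (pd e2 g) := by
  have : pd e2 g = sp2 g := (funext (sp2_eq_pd hg)).symm
  rw [this]; exact hper.sp2per hg

lemma esp2sp2 {f : PtT → ℝ} (hf : ContDiff ℝ (⊤:ℕ∞) f) (p : PtT) :
    sp2 (sp2 f) p = pd e2 (pd e2 f) p := by
  have h0 : sp2 f = pd e2 f := funext (sp2_eq_pd hf)
  rw [h0, sp2_eq_pd (pd_contDiff hf e2) p]

-- ## the flux fields
def G11 (η u : PtT → Pt) : PtT → ℝ := fun p =>
  (pd e2 (c2 η) p + 1) * pd e1 (c1 u) p + (-(pd e1 (c2 η) p)) * pd e2 (c1 u) p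
def G21 (η u : PtT → Pt) : PtT → ℝ := fun p =>
  (-(pd e2 (c1 η) p)) * pd e1 (c1 u) p + (pd e1 (c1 η) p + 1) * pd e2 (c1 u) p
def G12 (η u : PtT → Pt) : PtT → ℝ := fun p =>
  (pd e2 (c2 η) p + 1) * pd e1 (c2 u) p + (-(pd e1 (c2 η) p)) * pd e2 (c2 u) p
def G22 (η u : PtT → Pt) : PtT → ℝ := fun p =>
  (-(pd e2 (c1 η) p)) * pd e1 (c2 u) p + (pd e1 (c1 η) p + 1) * pd e2 (c2 u) p

def GEN (m : ℝ) (η u : PtT → Pt) : PtT → ℝ := fun p =>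
  c1 u p * c1 u p + c2 u p * c2 u p
    + m ^ 2 * (pd e2 (c1 η) p * pd e2 (c1 η) p + pd e2 (c2 η) p * pd e2 (c2 η) p)

def P1f (ν m : ℝ) (η u : PtT → Pt) (q : PtT → ℝ) : PtT → ℝ := fun p =>
  q p * ((pd e2 (c2 η) p + 1) * c1 u p + (-(pd e2 (c1 η) p)) * c2 u p)
  - ν * (c1 u p * ((pd e2 (c2 η) p + 1) * G11 η u p + (-(pd e2 (c1 η) p)) * G21 η u p)
       + c2 u p * ((pd e2 (c2 η) p + 1) * G12 η u p + (-(pd e2 (c1 η) p)) * G22 η u p))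

def P2f (ν m : ℝ) (η u : PtT → Pt) (q : PtT → ℝ) : PtT → ℝ := fun p =>
  q p * ((-(pd e1 (c2 η) p)) * c1 u p + (pd e1 (c1 η) p + 1) * c2 u p)
  - ν * (c1 u p * ((-(pd e1 (c2 η) p)) * G11 η u p + (pd e1 (c1 η) p + 1) * G21 η u p)
       + c2 u p * ((-(pd e1 (c2 η) p)) * G12 η u p + (pd e1 (c1 η) p + 1) * G22 η u p))
  - m ^ 2 * (c1 u p * pd e2 (c1 η) p + c2 u p * pd e2 (c2 η) p)

end Aux

/-- basic energy identity: let `(η, u, q)` be a smooth, spatially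
2-periodic solution of the non-resistive MHD system in Lagrangian coordinates
`η_t = u`, `u_t + ∇_𝒜 q − νΔ_𝒜 u = m²∂₂²η`, `div_𝒜 u = 0` on `ℝ² × I` with
`det(I + ∇η(·,t)) = 1`, where `𝒜 = (∇(η + id))^{-T}`.  Then for every `t ∈ I`:
`(1/2) d/dt ∫ (|u|² + m²|∂₂η|²) dy + ν ∫ |∇_𝒜 u|² dy = 0`. -/
theorem statement16 (ν m a b : ℝ) (hν : 0 < ν) (hab : a < b)
    (η u : PtT → Pt) (q : PtT → ℝ)
    (hη : ContDiff ℝ (⊤ : ℕ∞) (fun p : PtT => η p))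
    (hu : ContDiff ℝ (⊤ : ℕ∞) (fun p : PtT => u p))
    (hq : ContDiff ℝ (⊤ : ℕ∞) q)
    (hper : SPeriodic (c1 η) ∧ SPeriodic (c2 η) ∧ SPeriodic (c1 u) ∧
      SPeriodic (c2 u) ∧ SPeriodic q)
    (hdet : ∀ p : PtT, p.2 ∈ Set.Ioo a b →
      sp1 (c1 (zetaOf η)) p * sp2 (c2 (zetaOf η)) p
        - sp1 (c2 (zetaOf η)) p * sp2 (c1 (zetaOf η)) p = 1)
    (heq1 : ∀ p : PtT, p.2 ∈ Set.Ioo a b →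
      dt (c1 η) p = c1 u p ∧ dt (c2 η) p = c2 u p)
    (heq2 : ∀ p : PtT, p.2 ∈ Set.Ioo a b →
      dt (c1 u) p + gradA1 (zetaOf η) q p - ν * lapA (zetaOf η) (c1 u) p
          = m ^ 2 * sp2 (sp2 (c1 η)) p ∧
      dt (c2 u) p + gradA2 (zetaOf η) q p - ν * lapA (zetaOf η) (c2 u) p
          = m ^ 2 * sp2 (sp2 (c2 η)) p)
    (heq3 : ∀ p : PtT, p.2 ∈ Set.Ioo a b → divA (zetaOf η) u p = 0) :
    ∀ t ∈ Set.Ioo a b,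
      (1 / 2) * deriv (fun s : ℝ => ∫ y in cell,
          ((c1 u (y, s)) ^ 2 + (c2 u (y, s)) ^ 2
            + m ^ 2 * ((sp2 (c1 η) (y, s)) ^ 2 + (sp2 (c2 η) (y, s)) ^ 2))) t
        + ν * ∫ y in cell,
            ((gradA1 (zetaOf η) (c1 u) (y, t)) ^ 2 + (gradA2 (zetaOf η) (c1 u) (y, t)) ^ 2
              + (gradA1 (zetaOf η) (c2 u) (y, t)) ^ 2
              + (gradA2 (zetaOf η) (c2 u) (y, t)) ^ 2) = 0 := by
  intro t ht
  obtain ⟨pE1, pE2, pU1, pU2, pq⟩ := hper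
  have hE1 : ContDiff ℝ (⊤:ℕ∞) (c1 η) := contDiff_fst.comp hη
  have hE2 : ContDiff ℝ (⊤:ℕ∞) (c2 η) := contDiff_snd.comp hη
  have hU1 : ContDiff ℝ (⊤:ℕ∞) (c1 u) := contDiff_fst.comp hu
  have hU2 : ContDiff ℝ (⊤:ℕ∞) (c2 u) := contDiff_snd.comp hu
  -- fderiv of coordinate projections on Pt
  have hfst : ∀ w : Pt, fderiv ℝ (fun y : Pt => y.1) w = ContinuousLinearMap.fst ℝ ℝ ℝ :=
    fun w => hasFDerivAt_fst.fderiv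
  have hsnd : ∀ w : Pt, fderiv ℝ (fun y : Pt => y.2) w = ContinuousLinearMap.snd ℝ ℝ ℝ :=
    fun w => hasFDerivAt_snd.fderiv
  -- the matrix 𝒜 in terms of pd
  have eA11 : ∀ p : PtT, A11 (zetaOf η) p = pd e2 (c2 η) p + 1 := by
    intro p
    have hd : DifferentiableAt ℝ (fun y : Pt => c2 η (y, p.2)) p.1 :=
      ((contDiff_slice hE2 p.2).differentiable le_top1) p.1
    have h2 : fderiv ℝ (fun y : Pt => c2 η (y, p.2)) p.1 ((0:ℝ),(1:ℝ)) = pd e2 (c2 η) p :=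
      sp2_eq_pd hE2 p
    show fderiv ℝ (fun y : Pt => c2 η (y, p.2) + y.2) p.1 ((0:ℝ),(1:ℝ)) = _
    rw [fderiv_fun_add hd differentiable_snd.differentiableAt, ContinuousLinearMap.add_apply,
      h2, hsnd p.1]
    norm_num
  have eA12 : ∀ p : PtT, A12 (zetaOf η) p = -(pd e1 (c2 η) p) := by
    intro p
    have hd : DifferentiableAt ℝ (fun y : Pt => c2 η (y, p.2)) p.1 :=
      ((contDiff_slice hE2 p.2).differentiable le_top1) p.1
    have h2 : fderiv ℝ (fun y : Pt => c2 η (y, p.2)) p.1 ((1:ℝ),(0:ℝ)) = pd e1 (c2 η) p :=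
      sp1_eq_pd hE2 p
    show -(fderiv ℝ (fun y : Pt => c2 η (y, p.2) + y.2) p.1 ((1:ℝ),(0:ℝ))) = _
    rw [fderiv_fun_add hd differentiable_snd.differentiableAt, ContinuousLinearMap.add_apply,
      h2, hsnd p.1]
    norm_num
  have eA21 : ∀ p : PtT, A21 (zetaOf η) p = -(pd e2 (c1 η) p) := by
    intro p
    have hd : DifferentiableAt ℝ (fun y : Pt => c1 η (y, p.2)) p.1 :=
      ((contDiff_slice hE1 p.2).differentiable le_top1) p.1
    have h2 : fderiv ℝ (fun y : Pt => c1 η (y, p.2)) p.1 ((0:ℝ),(1:ℝ)) = pd e2 (c1 η) p :=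
      sp2_eq_pd hE1 p
    show -(fderiv ℝ (fun y : Pt => c1 η (y, p.2) + y.1) p.1 ((0:ℝ),(1:ℝ))) = _
    rw [fderiv_fun_add hd differentiable_fst.differentiableAt, ContinuousLinearMap.add_apply,
      h2, hfst p.1]
    norm_num
  have eA22 : ∀ p : PtT, A22 (zetaOf η) p = pd e1 (c1 η) p + 1 := by
    intro p
    have hd : DifferentiableAt ℝ (fun y : Pt => c1 η (y, p.2)) p.1 :=
      ((contDiff_slice hE1 p.2).differentiable le_top1) p.1
    have h2 : fderiv ℝ (fun y : Pt => c1 η (y, p.2)) p.1 ((1:ℝ),(0:ℝ)) = pd e1 (c1 η) p :=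
      sp1_eq_pd hE1 p
    show fderiv ℝ (fun y : Pt => c1 η (y, p.2) + y.1) p.1 ((1:ℝ),(0:ℝ)) = _
    rw [fderiv_fun_add hd differentiable_fst.differentiableAt, ContinuousLinearMap.add_apply,
      h2, hfst p.1]
    norm_num
  -- gradients in terms of pd
  have eG11 : gradA1 (zetaOf η) (c1 u) = G11 η u := by
    funext p
    show A11 (zetaOf η) p * sp1 (c1 u) p + A12 (zetaOf η) p * sp2 (c1 u) p = _
    rw [eA11 p, eA12 p, sp1_eq_pd hU1 p, sp2_eq_pd hU1 p]
    rfl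
  have eG21 : gradA2 (zetaOf η) (c1 u) = G21 η u := by
    funext p
    show A21 (zetaOf η) p * sp1 (c1 u) p + A22 (zetaOf η) p * sp2 (c1 u) p = _
    rw [eA21 p, eA22 p, sp1_eq_pd hU1 p, sp2_eq_pd hU1 p]
    rfl
  have eG12 : gradA1 (zetaOf η) (c2 u) = G12 η u := by
    funext p
    show A11 (zetaOf η) p * sp1 (c2 u) p + A12 (zetaOf η) p * sp2 (c2 u) p = _
    rw [eA11 p, eA12 p, sp1_eq_pd hU2 p, sp2_eq_pd hU2 p]
    rfl
  have eG22 : gradA2 (zetaOf η) (c2 u) = G22 η u := by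
    funext p
    show A21 (zetaOf η) p * sp1 (c2 u) p + A22 (zetaOf η) p * sp2 (c2 u) p = _
    rw [eA21 p, eA22 p, sp1_eq_pd hU2 p, sp2_eq_pd hU2 p]
    rfl
  have eGq1 : ∀ p : PtT, gradA1 (zetaOf η) q p
      = (pd e2 (c2 η) p + 1) * pd e1 q p + (-(pd e1 (c2 η) p)) * pd e2 q p := by
    intro p
    show A11 (zetaOf η) p * sp1 q p + A12 (zetaOf η) p * sp2 q p = _
    rw [eA11 p, eA12 p, sp1_eq_pd hq p, sp2_eq_pd hq p]
  have eGq2 : ∀ p : PtT, gradA2 (zetaOf η) q p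
      = (-(pd e2 (c1 η) p)) * pd e1 q p + (pd e1 (c1 η) p + 1) * pd e2 q p := by
    intro p
    show A21 (zetaOf η) p * sp1 q p + A22 (zetaOf η) p * sp2 q p = _
    rw [eA21 p, eA22 p, sp1_eq_pd hq p, sp2_eq_pd hq p]
  -- smoothness of the flux pieces
  have hG11 : ContDiff ℝ (⊤:ℕ∞) (G11 η u) := by unfold G11; fun_prop
  have hG21 : ContDiff ℝ (⊤:ℕ∞) (G21 η u) := by unfold G21; fun_prop
  have hG12 : ContDiff ℝ (⊤:ℕ∞) (G12 η u) := by unfold G12; fun_prop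
  have hG22 : ContDiff ℝ (⊤:ℕ∞) (G22 η u) := by unfold G22; fun_prop
  have hGEN : ContDiff ℝ (⊤:ℕ∞) (GEN m η u) := by unfold GEN; fun_prop
  have hP1 : ContDiff ℝ (⊤:ℕ∞) (P1f ν m η u q) := by unfold P1f G11 G21 G12 G22; fun_prop
  have hP2 : ContDiff ℝ (⊤:ℕ∞) (P2f ν m η u q) := by unfold P2f G11 G21 G12 G22; fun_prop
  -- Laplacians in terms of pd
  have elap1 : ∀ p : PtT, lapA (zetaOf η) (c1 u) p
      = (pd e2 (c2 η) p + 1) * pd e1 (G11 η u) p + (-(pd e1 (c2 η) p)) * pd e2 (G11 η u) p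
        + (-(pd e2 (c1 η) p)) * pd e1 (G21 η u) p + (pd e1 (c1 η) p + 1) * pd e2 (G21 η u) p := by
    intro p
    show A11 (zetaOf η) p * sp1 (gradA1 (zetaOf η) (c1 u)) p
        + A12 (zetaOf η) p * sp2 (gradA1 (zetaOf η) (c1 u)) p
        + A21 (zetaOf η) p * sp1 (gradA2 (zetaOf η) (c1 u)) p
        + A22 (zetaOf η) p * sp2 (gradA2 (zetaOf η) (c1 u)) p = _
    rw [eG11, eG21, eA11 p, eA12 p, eA21 p, eA22 p, sp1_eq_pd hG11 p, sp2_eq_pd hG11 p,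
      sp1_eq_pd hG21 p, sp2_eq_pd hG21 p]
  have elap2 : ∀ p : PtT, lapA (zetaOf η) (c2 u) p
      = (pd e2 (c2 η) p + 1) * pd e1 (G12 η u) p + (-(pd e1 (c2 η) p)) * pd e2 (G12 η u) p
        + (-(pd e2 (c1 η) p)) * pd e1 (G22 η u) p + (pd e1 (c1 η) p + 1) * pd e2 (G22 η u) p := by
    intro p
    show A11 (zetaOf η) p * sp1 (gradA1 (zetaOf η) (c2 u)) p
        + A12 (zetaOf η) p * sp2 (gradA1 (zetaOf η) (c2 u)) p
        + A21 (zetaOf η) p * sp1 (gradA2 (zetaOf η) (c2 u)) p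
        + A22 (zetaOf η) p * sp2 (gradA2 (zetaOf η) (c2 u)) p = _
    rw [eG12, eG22, eA11 p, eA12 p, eA21 p, eA22 p, sp1_eq_pd hG12 p, sp2_eq_pd hG12 p,
      sp1_eq_pd hG22 p, sp2_eq_pd hG22 p]
  -- divergence equation
  have edivA : ∀ p : PtT, divA (zetaOf η) u p
      = (pd e2 (c2 η) p + 1) * pd e1 (c1 u) p + (-(pd e1 (c2 η) p)) * pd e2 (c1 u) p
        + (-(pd e2 (c1 η) p)) * pd e1 (c2 u) p + (pd e1 (c1 η) p + 1) * pd e2 (c2 u) p := by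
    intro p
    show A11 (zetaOf η) p * sp1 (c1 u) p + A12 (zetaOf η) p * sp2 (c1 u) p
        + A21 (zetaOf η) p * sp1 (c2 u) p + A22 (zetaOf η) p * sp2 (c2 u) p = _
    rw [eA11 p, eA12 p, eA21 p, eA22 p, sp1_eq_pd hU1 p, sp2_eq_pd hU1 p,
      sp1_eq_pd hU2 p, sp2_eq_pd hU2 p]
  -- time derivative of magnetic terms
  have hmag1 : ∀ p : PtT, p.2 ∈ Set.Ioo a b →
      pd et (pd e2 (c1 η)) p = pd e2 (c1 u) p := by
    intro p hp
    rw [pd_comm hE1 et e2 p, ← sp2_eq_pd (pd_contDiff hE1 et) p, ← sp2_eq_pd hU1 p]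
    apply sp2_congr_slice
    intro y
    rw [← dt_eq_pd hE1 (y, p.2)]
    exact (heq1 (y, p.2) hp).1
  have hmag2 : ∀ p : PtT, p.2 ∈ Set.Ioo a b →
      pd et (pd e2 (c2 η)) p = pd e2 (c2 u) p := by
    intro p hp
    rw [pd_comm hE2 et e2 p, ← sp2_eq_pd (pd_contDiff hE2 et) p, ← sp2_eq_pd hU2 p]
    apply sp2_congr_slice
    intro y
    rw [← dt_eq_pd hE2 (y, p.2)]
    exact (heq1 (y, p.2) hp).2
  -- Clairaut canonicalization
  have hcE1 : ∀ p : PtT, pd e2 (pd e1 (c1 η)) p = pd e1 (pd e2 (c1 η)) p :=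
    fun p => pd_comm hE1 e2 e1 p
  have hcE2 : ∀ p : PtT, pd e2 (pd e1 (c2 η)) p = pd e1 (pd e2 (c2 η)) p :=
    fun p => pd_comm hE2 e2 e1 p
  have hcU1 : ∀ p : PtT, pd e2 (pd e1 (c1 u)) p = pd e1 (pd e2 (c1 u)) p :=
    fun p => pd_comm hU1 e2 e1 p
  have hcU2 : ∀ p : PtT, pd e2 (pd e1 (c2 u)) p = pd e1 (pd e2 (c2 u)) p :=
    fun p => pd_comm hU2 e2 e1 p
  -- the pointwise energy identity
  have key : ∀ p : PtT, p.2 ∈ Set.Ioo a b →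
      1/2 * pd et (GEN m η u) p
        + ν * (G11 η u p * G11 η u p + G21 η u p * G21 η u p
            + G12 η u p * G12 η u p + G22 η u p * G22 η u p)
        + pd e1 (P1f ν m η u q) p + pd e2 (P2f ν m η u q) p = 0 := by
    intro p hp
    have h1 := (heq2 p hp).1
    have h2 := (heq2 p hp).2
    have h3 := heq3 p hp
    rw [dt_eq_pd hU1 p, eGq1 p, elap1 p, esp2sp2 hE1 p] at h1
    rw [dt_eq_pd hU2 p, eGq2 p, elap2 p, esp2sp2 hE2 p] at h2
    rw [edivA p] at h3
    have hm1 := hmag1 p hp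
    have hm2 := hmag2 p hp
    delta P1f P2f GEN G11 G21 G12 G22 at h1 h2 ⊢
    simp (disch := fun_prop) only [pdE_add, pdE_mul, pdE_constmul, pdE_sub, pdE_addconst,
      pdE_neg, pdE_cst] at h1
    simp (disch := fun_prop) only [pdE_add, pdE_mul, pdE_constmul, pdE_sub, pdE_addconst,
      pdE_neg, pdE_cst] at h2
    simp (disch := fun_prop) only [pdE_add, pdE_mul, pdE_constmul, pdE_sub, pdE_addconst,
      pdE_neg, pdE_cst]
    simp only [hcE1, hcE2, hcU1, hcU2] at h1 h2 ⊢
    rw [hm1, hm2]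
    linear_combination c1 u p * h1 + c2 u p * h2 + q p * h3
  -- periodicity of the flux fields
  have pE1d1 : SPeriodic (pd e1 (c1 η)) := pE1.pd1 hE1
  have pE1d2 : SPeriodic (pd e2 (c1 η)) := pE1.pd2 hE1
  have pE2d1 : SPeriodic (pd e1 (c2 η)) := pE2.pd1 hE2
  have pE2d2 : SPeriodic (pd e2 (c2 η)) := pE2.pd2 hE2
  have pU1d1 : SPeriodic (pd e1 (c1 u)) := pU1.pd1 hU1
  have pU1d2 : SPeriodic (pd e2 (c1 u)) := pU1.pd2 hU1
  have pU2d1 : SPeriodic (pd e1 (c2 u)) := pU2.pd1 hU2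
  have pU2d2 : SPeriodic (pd e2 (c2 u)) := pU2.pd2 hU2
  have hperP1 : SPeriodic (P1f ν m η u q) := by
    refine ⟨fun p => ?_, fun p => ?_⟩ <;>
      simp only [P1f, G11, G21, G12, G22] <;>
      simp only [pq.1, pq.2, pU1.1, pU1.2, pU2.1, pU2.2, pE1d1.1, pE1d1.2, pE1d2.1, pE1d2.2,
        pE2d1.1, pE2d1.2, pE2d2.1, pE2d2.2, pU1d1.1, pU1d1.2, pU1d2.1, pU1d2.2,
        pU2d1.1, pU2d1.2, pU2d2.1, pU2d2.2]
  have hperP2 : SPeriodic (P2f ν m η u q) := by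
    refine ⟨fun p => ?_, fun p => ?_⟩ <;>
      simp only [P2f, G11, G21, G12, G22] <;>
      simp only [pq.1, pq.2, pU1.1, pU1.2, pU2.1, pU2.2, pE1d1.1, pE1d1.2, pE1d2.1, pE1d2.2,
        pE2d1.1, pE2d1.2, pE2d2.1, pE2d2.2, pU1d1.1, pU1d1.2, pU1d2.1, pU1d2.2,
        pU2d1.1, pU2d1.2, pU2d2.1, pU2d2.2]
  -- rewrite the energy integrand
  have hfun1 : (fun s : ℝ => ∫ y in cell,
      ((c1 u (y, s)) ^ 2 + (c2 u (y, s)) ^ 2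
        + m ^ 2 * ((sp2 (c1 η) (y, s)) ^ 2 + (sp2 (c2 η) (y, s)) ^ 2)))
      = fun s : ℝ => ∫ y in cell, GEN m η u (y, s) := by
    funext s
    have h : (fun y : Pt => (c1 u (y, s)) ^ 2 + (c2 u (y, s)) ^ 2
        + m ^ 2 * ((sp2 (c1 η) (y, s)) ^ 2 + (sp2 (c2 η) (y, s)) ^ 2))
        = fun y : Pt => GEN m η u (y, s) := by
      funext y
      simp only [GEN]
      rw [sp2_eq_pd hE1 (y, s), sp2_eq_pd hE2 (y, s)]
      ring
    rw [h]
  rw [hfun1, (hasDerivAt_integral_cell hGEN t).deriv]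
  have hdtconv : ∀ y : Pt, dt (GEN m η u) (y, t) = pd et (GEN m η u) (y, t) :=
    fun y => dt_eq_pd hGEN (y, t)
  simp only [hdtconv]
  -- rewrite the dissipation integrand
  have hSQconv : ∀ y : Pt,
      (gradA1 (zetaOf η) (c1 u) (y, t)) ^ 2 + (gradA2 (zetaOf η) (c1 u) (y, t)) ^ 2
        + (gradA1 (zetaOf η) (c2 u) (y, t)) ^ 2 + (gradA2 (zetaOf η) (c2 u) (y, t)) ^ 2
      = G11 η u (y, t) * G11 η u (y, t) + G21 η u (y, t) * G21 η u (y, t)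
        + G12 η u (y, t) * G12 η u (y, t) + G22 η u (y, t) * G22 η u (y, t) := by
    intro y
    rw [eG11, eG21, eG12, eG22]
    ring
  simp only [hSQconv]
  -- combine and integrate by parts
  have hSQs : ContDiff ℝ (⊤:ℕ∞) (fun p : PtT => G11 η u p * G11 η u p
      + G21 η u p * G21 η u p + G12 η u p * G12 η u p + G22 η u p * G22 η u p) := by
    fun_prop
  have hiA : IntegrableOn (fun y : Pt => pd et (GEN m η u) (y, t)) cell :=
    integrableOn_cell ((pd_continuous hGEN et).comp (continuous_id.prodMk continuous_const))
  have hiB : IntegrableOn (fun y : Pt => G11 η u (y, t) * G11 η u (y, t)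
      + G21 η u (y, t) * G21 η u (y, t) + G12 η u (y, t) * G12 η u (y, t)
      + G22 η u (y, t) * G22 η u (y, t)) cell :=
    integrableOn_cell (hSQs.continuous.comp (continuous_id.prodMk continuous_const))
  have hcellmeas : MeasurableSet cell := measurableSet_Ioo.prod measurableSet_Ioo
  rw [← MeasureTheory.integral_const_mul, ← MeasureTheory.integral_const_mul,
    ← MeasureTheory.integral_add (hiA.const_mul _) (hiB.const_mul _)]
  have hsP1 : ∀ y : Pt, sp1 (P1f ν m η u q) (y, t) = pd e1 (P1f ν m η u q) (y, t) :=
    fun y => sp1_eq_pd hP1 (y, t)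
  have hsP2 : ∀ y : Pt, sp2 (P2f ν m η u q) (y, t) = pd e2 (P2f ν m η u q) (y, t) :=
    fun y => sp2_eq_pd hP2 (y, t)
  have hEqOn : Set.EqOn
      (fun y : Pt => 1 / 2 * pd et (GEN m η u) (y, t)
        + ν * (G11 η u (y, t) * G11 η u (y, t) + G21 η u (y, t) * G21 η u (y, t)
          + G12 η u (y, t) * G12 η u (y, t) + G22 η u (y, t) * G22 η u (y, t)))
      (fun y : Pt => -(sp1 (P1f ν m η u q) (y, t)) + -(sp2 (P2f ν m η u q) (y, t))) cell := by
    intro y _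
    have hk := key (y, t) ht
    simp only [hsP1 y, hsP2 y]
    linarith [hk]
  rw [MeasureTheory.setIntegral_congr_fun hcellmeas hEqOn]
  have hi1 : IntegrableOn (fun y : Pt => -(sp1 (P1f ν m η u q) (y, t))) cell :=
    (integrableOn_cell (sp1_continuous_slice hP1 t)).neg
  have hi2 : IntegrableOn (fun y : Pt => -(sp2 (P2f ν m η u q) (y, t))) cell :=
    (integrableOn_cell (sp2_continuous_slice hP2 t)).neg
  rw [MeasureTheory.integral_add hi1 hi2, MeasureTheory.integral_neg,
    MeasureTheory.integral_neg, integral_sp1_zero hP1 hperP1 t, integral_sp2_zero hP2 hperP2 t]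
  norm_num
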